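/- arXiv:1905.01824 — 6 statements merged into one kernel-verified Lean document; each statement's English description precedes it below -/
import Mathlib

section
/- Two bipartite pure states ψ, φ : Fin d₁ × Fin d₂ → ℂ are SLOCC-equivalent if and only if their coefficient matrices have the same rank (Schmidt number), i.e., there exist invertible complex matrices A (d₁×d₁) and B (d₂×d₂) with φ(i,j) = Σ_{k,l} A(i,k) B(j,l) ψ(k,l) if and only if rank C_φ = rank C_ψ. -/
open Module LinearMap Submodule Matrix

/-- Two linear maps between finite-dimensional vector spaces with equal rank are
equivalent up to composition with automorphisms. -/
lemma exists_equiv_of_finrank_range_eq {K V W : Type*} [Field K]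
    [AddCommGroup V] [Module K V] [AddCommGroup W] [Module K W]
    [FiniteDimensional K V] [FiniteDimensional K W]
    (f g : V →ₗ[K] W)
    (h : finrank K (LinearMap.range f) = finrank K (LinearMap.range g)) :
    ∃ (e : W ≃ₗ[K] W) (e' : V ≃ₗ[K] V), ∀ v, g (e' v) = e (f v) := by
  obtain ⟨C, hC⟩ := Submodule.exists_isCompl (LinearMap.ker f)
  obtain ⟨D, hD⟩ := Submodule.exists_isCompl (LinearMap.ker g)
  obtain ⟨Rf, hRf⟩ := Submodule.exists_isCompl (LinearMap.range f)
  obtain ⟨Rg, hRg⟩ := Submodule.exists_isCompl (LinearMap.range g)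
  -- isomorphisms between complements of kernels and ranges
  let f' : C ≃ₗ[K] LinearMap.range f :=
    (Submodule.quotientEquivOfIsCompl _ _ hC).symm.trans f.quotKerEquivRange
  let g' : D ≃ₗ[K] LinearMap.range g :=
    (Submodule.quotientEquivOfIsCompl _ _ hD).symm.trans g.quotKerEquivRange
  have hf' : ∀ c : C, (f' c : W) = f c := by
    intro c
    simp [f', Submodule.quotientEquivOfIsCompl_symm_apply,
      LinearMap.quotKerEquivRange_apply_mk]
  have hg' : ∀ d : D, (g' d : W) = g d := by
    intro d
    simp [g', Submodule.quotientEquivOfIsCompl_symm_apply,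
      LinearMap.quotKerEquivRange_apply_mk]
  -- dimension bookkeeping
  have hCD : finrank K C = finrank K D := by
    rw [f'.finrank_eq, g'.finrank_eq, h]
  have hker : finrank K (LinearMap.ker f) = finrank K (LinearMap.ker g) := by
    have h1 := Submodule.finrank_add_eq_of_isCompl hC
    have h2 := Submodule.finrank_add_eq_of_isCompl hD
    omega
  have hcompl : finrank K Rf = finrank K Rg := by
    have h1 := Submodule.finrank_add_eq_of_isCompl hRf
    have h2 := Submodule.finrank_add_eq_of_isCompl hRg
    omega
  let α : C ≃ₗ[K] D := LinearEquiv.ofFinrankEq _ _ hCD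
  let β : (LinearMap.ker f : Submodule K V) ≃ₗ[K] (LinearMap.ker g : Submodule K V) :=
    LinearEquiv.ofFinrankEq _ _ hker
  let γ : (LinearMap.range f : Submodule K W) ≃ₗ[K] (LinearMap.range g : Submodule K W) :=
    f'.symm.trans (α.trans g')
  let δ : Rf ≃ₗ[K] Rg := LinearEquiv.ofFinrankEq _ _ hcompl
  let e1 := Submodule.prodEquivOfIsCompl _ _ hC
  let e1g := Submodule.prodEquivOfIsCompl _ _ hD
  let e2 := Submodule.prodEquivOfIsCompl _ _ hRf
  let e2g := Submodule.prodEquivOfIsCompl _ _ hRg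
  refine ⟨e2.symm.trans ((γ.prodCongr δ).trans e2g), e1.symm.trans ((β.prodCongr α).trans e1g), ?_⟩
  intro v
  obtain ⟨⟨k, c⟩, rfl⟩ := e1.surjective v
  have hv : e1 (k, c) = (k : V) + (c : V) := rfl
  -- left-hand side
  have hlhs : g ((e1.symm.trans ((β.prodCongr α).trans e1g)) (e1 (k, c))) = g (α c) := by
    simp only [LinearEquiv.trans_apply, LinearEquiv.symm_apply_apply]
    have h2 : e1g ((β.prodCongr α) (k, c)) = ((β k : V) + (α c : V)) := rfl
    rw [h2, map_add]
    have hk : g (β k : V) = 0 := (β k).2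
    rw [hk, zero_add]
  -- right-hand side
  have hfv : f (e1 (k, c)) = f c := by
    rw [hv, map_add]
    have hk : f (k : V) = 0 := k.2
    rw [hk, zero_add]
  have hsymm : e2.symm (f (c : V)) = (f' c, (0 : Rf)) := by
    rw [LinearEquiv.symm_apply_eq]
    show f (c : V) = (f' c : W) + ((0 : Rf) : W)
    rw [hf', Submodule.coe_zero, add_zero]
  have hrhs : (e2.symm.trans ((γ.prodCongr δ).trans e2g)) (f (e1 (k, c))) = g (α c) := by
    rw [hfv]
    simp only [LinearEquiv.trans_apply, hsymm]
    have h3 : e2g ((γ.prodCongr δ) (f' c, (0 : Rf))) = ((γ (f' c) : W) + ((δ 0 : Rg) : W)) := rfl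
    rw [h3, map_zero, Submodule.coe_zero, add_zero]
    have : γ (f' c) = g' (α c) := by
      simp [γ, LinearEquiv.trans_apply, LinearEquiv.symm_apply_apply]
    rw [this, hg']
  rw [hlhs, hrhs]

/-- Two bipartite pure states are SLOCC-equivalent iff their coefficient matrices
have the same rank (Schmidt number). -/
theorem bipartite_slocc_iff_rank_eq {d₁ d₂ : ℕ}
    (ψ φ : Fin d₁ × Fin d₂ → ℂ) :
    (∃ (A : Matrix (Fin d₁) (Fin d₁) ℂ) (B : Matrix (Fin d₂) (Fin d₂) ℂ),
        IsUnit A ∧ IsUnit B ∧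
        ∀ i j, φ (i, j) = ∑ k : Fin d₁, ∑ l : Fin d₂, A i k * B j l * ψ (k, l)) ↔
    (Matrix.of fun i j => φ (i, j)).rank = (Matrix.of fun i j => ψ (i, j)).rank := by
  set Mψ : Matrix (Fin d₁) (Fin d₂) ℂ := Matrix.of fun i j => ψ (i, j) with hMψ
  set Mφ : Matrix (Fin d₁) (Fin d₂) ℂ := Matrix.of fun i j => φ (i, j) with hMφ
  constructor
  · rintro ⟨A, B, hA, hB, hEq⟩
    have hM : Mφ = A * Mψ * Bᵀ := by
      ext i j
      rw [hMφ]
      simp only [Matrix.of_apply, Matrix.mul_apply, Matrix.transpose_apply]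
      rw [hEq i j]
      rw [Finset.sum_comm]
      congr 1
      ext l
      rw [Finset.sum_mul]
      congr 1
      ext k
      simp [hMψ]
      ring
    rw [hM, Matrix.mul_assoc]
    rw [Matrix.rank_mul_eq_right_of_isUnit_det A (Mψ * Bᵀ)
      ((Matrix.isUnit_iff_isUnit_det A).mp hA)]
    rw [Matrix.rank_mul_eq_left_of_isUnit_det Bᵀ Mψ
      (by rw [Matrix.det_transpose]; exact (Matrix.isUnit_iff_isUnit_det B).mp hB)]
  · intro h
    obtain ⟨e, e', he⟩ := exists_equiv_of_finrank_range_eq Mψ.mulVecLin Mφ.mulVecLin h.symm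
    have hcomp : Mφ.mulVecLin ∘ₗ (e' : (Fin d₂ → ℂ) →ₗ[ℂ] (Fin d₂ → ℂ)) =
        (e : (Fin d₁ → ℂ) →ₗ[ℂ] (Fin d₁ → ℂ)) ∘ₗ Mψ.mulVecLin := by
      exact LinearMap.ext he
    have hmat : Mφ * LinearMap.toMatrix' (e' : (Fin d₂ → ℂ) →ₗ[ℂ] (Fin d₂ → ℂ)) =
        LinearMap.toMatrix' (e : (Fin d₁ → ℂ) →ₗ[ℂ] (Fin d₁ → ℂ)) * Mψ := by
      have := congrArg LinearMap.toMatrix' hcomp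
      rwa [LinearMap.toMatrix'_comp, LinearMap.toMatrix'_comp,
        ← Matrix.toLin'_apply', ← Matrix.toLin'_apply',
        LinearMap.toMatrix'_toLin', LinearMap.toMatrix'_toLin'] at this
    set P := LinearMap.toMatrix' (e : (Fin d₁ → ℂ) →ₗ[ℂ] (Fin d₁ → ℂ)) with hP
    set Q := LinearMap.toMatrix' (e' : (Fin d₂ → ℂ) →ₗ[ℂ] (Fin d₂ → ℂ)) with hQ
    have hQunit : IsUnit Q := by
      refine ⟨⟨Q, LinearMap.toMatrix' (e'.symm : (Fin d₂ → ℂ) →ₗ[ℂ] (Fin d₂ → ℂ)), ?_, ?_⟩, rfl⟩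
      · rw [hQ, ← LinearMap.toMatrix'_comp]
        have h1 : (e' : (Fin d₂ → ℂ) →ₗ[ℂ] (Fin d₂ → ℂ)) ∘ₗ
            (e'.symm : (Fin d₂ → ℂ) →ₗ[ℂ] (Fin d₂ → ℂ)) = LinearMap.id :=
          LinearMap.ext fun v => e'.apply_symm_apply v
        rw [h1, LinearMap.toMatrix'_id]
      · rw [hQ, ← LinearMap.toMatrix'_comp]
        have h1 : (e'.symm : (Fin d₂ → ℂ) →ₗ[ℂ] (Fin d₂ → ℂ)) ∘ₗ
            (e' : (Fin d₂ → ℂ) →ₗ[ℂ] (Fin d₂ → ℂ)) = LinearMap.id :=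
          LinearMap.ext fun v => e'.symm_apply_apply v
        rw [h1, LinearMap.toMatrix'_id]
    obtain ⟨Qu, hQu⟩ := id hQunit
    have hQinv : IsUnit (Q⁻¹) := Matrix.isUnit_nonsing_inv_iff.mpr hQunit
    have hMφ' : Mφ = P * Mψ * Q⁻¹ := by
      have h1 : Mφ * Q * Q⁻¹ = P * Mψ * Q⁻¹ := by rw [hmat]
      rwa [Matrix.mul_assoc Mφ Q Q⁻¹, Matrix.mul_nonsing_inv _
        ((Matrix.isUnit_iff_isUnit_det Q).mp ⟨Qu, hQu⟩), Matrix.mul_one] at h1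
    refine ⟨P, (Q⁻¹)ᵀ, ?_, ?_, ?_⟩
    · refine ⟨⟨P, LinearMap.toMatrix' (e.symm : (Fin d₁ → ℂ) →ₗ[ℂ] (Fin d₁ → ℂ)), ?_, ?_⟩, rfl⟩
      · rw [hP, ← LinearMap.toMatrix'_comp]
        have h1 : (e : (Fin d₁ → ℂ) →ₗ[ℂ] (Fin d₁ → ℂ)) ∘ₗ
            (e.symm : (Fin d₁ → ℂ) →ₗ[ℂ] (Fin d₁ → ℂ)) = LinearMap.id :=
          LinearMap.ext fun v => e.apply_symm_apply v
        rw [h1, LinearMap.toMatrix'_id]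
      · rw [hP, ← LinearMap.toMatrix'_comp]
        have h1 : (e.symm : (Fin d₁ → ℂ) →ₗ[ℂ] (Fin d₁ → ℂ)) ∘ₗ
            (e : (Fin d₁ → ℂ) →ₗ[ℂ] (Fin d₁ → ℂ)) = LinearMap.id :=
          LinearMap.ext fun v => e.symm_apply_apply v
        rw [h1, LinearMap.toMatrix'_id]
    · exact (Matrix.isUnit_iff_isUnit_det _).mpr
        (by rw [Matrix.det_transpose]; exact (Matrix.isUnit_iff_isUnit_det _).mp hQinv)
    · intro i j
      have := congrFun (congrFun hMφ' i) j
      simp only [hMφ, Matrix.of_apply] at this ⊢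
      rw [this]
      simp only [Matrix.mul_apply, Matrix.transpose_apply, Finset.sum_mul]
      rw [Finset.sum_comm]
      refine Finset.sum_congr rfl fun k _ => Finset.sum_congr rfl fun l _ => ?_
      simp only [hMψ, Matrix.of_apply]
      ring
end

section
/- The three-qubit GHZ state |000⟩ + |111⟩ is not SLOCC-equivalent to the three-qubit W state |100⟩ + |010⟩ + |001⟩, i.e., there are no invertible 2×2 complex matrices A₁, A₂, A₃ mapping one to the other by local action. -/
/-- The three-qubit GHZ state `|000⟩ + |111⟩`. -/
noncomputable def GHZ3 : Fin 2 × Fin 2 × Fin 2 → ℂ :=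
  fun x => if x = (0, 0, 0) ∨ x = (1, 1, 1) then 1 else 0

/-- The three-qubit W state `|100⟩ + |010⟩ + |001⟩`. -/
noncomputable def W3 : Fin 2 × Fin 2 × Fin 2 → ℂ :=
  fun x => if x = (1, 0, 0) ∨ x = (0, 1, 0) ∨ x = (0, 0, 1) then 1 else 0

/-- The GHZ state is not SLOCC-equivalent to the W state: no invertible local
operators map one to the other. -/
theorem ghz_not_slocc_equiv_w :
    ¬ ∃ A₁ A₂ A₃ : Matrix (Fin 2) (Fin 2) ℂ,
        IsUnit A₁ ∧ IsUnit A₂ ∧ IsUnit A₃ ∧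
        ∀ i j k : Fin 2,
          W3 (i, j, k) =
            ∑ a : Fin 2, ∑ b : Fin 2, ∑ c : Fin 2,
              A₁ i a * A₂ j b * A₃ k c * GHZ3 (a, b, c) := by
  rintro ⟨A₁, A₂, A₃, -, -, -, h⟩
  set a0 := A₁ 0 0; set a1 := A₁ 1 0; set d0 := A₁ 0 1; set d1 := A₁ 1 1
  set b0 := A₂ 0 0; set b1 := A₂ 1 0; set e0 := A₂ 0 1; set e1 := A₂ 1 1
  set c0 := A₃ 0 0; set c1 := A₃ 1 0; set f0 := A₃ 0 1; set f1 := A₃ 1 1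
  have e000 := h 0 0 0
  have e001 := h 0 0 1
  have e010 := h 0 1 0
  have e011 := h 0 1 1
  have e100 := h 1 0 0
  have e101 := h 1 0 1
  have e110 := h 1 1 0
  have e111 := h 1 1 1
  simp only [GHZ3, W3, Fin.sum_univ_two, Prod.mk.injEq] at e000 e001 e010 e011 e100 e101 e110 e111
  norm_num at e000 e001 e010 e011 e100 e101 e110 e111
  -- slices: W(i,j,k) = a_i * (b_j * c_k) + d_i * (e_j * f_k)
  -- Let D = a0*d1 - a1*d0.  Then D*(b_j*c_k) and D*(e_j*f_k) are determined.
  have hp01 : (a0 * d1 - a1 * d0) * (b0 * c1) = d1 := by linear_combination d0 * e101 - d1 * e001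
  have hp10 : (a0 * d1 - a1 * d0) * (b1 * c0) = d1 := by linear_combination d0 * e110 - d1 * e010
  have hp00 : (a0 * d1 - a1 * d0) * (b0 * c0) = -d0 := by linear_combination d0 * e100 - d1 * e000
  have hp11 : (a0 * d1 - a1 * d0) * (b1 * c1) = 0 := by linear_combination d0 * e111 - d1 * e011
  have hq00 : (a0 * d1 - a1 * d0) * (e0 * f0) = a0 := by linear_combination a1 * e000 - a0 * e100
  have hq01 : (a0 * d1 - a1 * d0) * (e0 * f1) = -a1 := by linear_combination a1 * e001 - a0 * e101
  have hq10 : (a0 * d1 - a1 * d0) * (e1 * f0) = -a1 := by linear_combination a1 * e010 - a0 * e110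
  have hq11 : (a0 * d1 - a1 * d0) * (e1 * f1) = 0 := by linear_combination a1 * e011 - a0 * e111
  have hd1 : d1 = 0 := by
    have hsq : d1 * d1 = 0 := by
      calc d1 * d1 = ((a0 * d1 - a1 * d0) * (b0 * c1)) * ((a0 * d1 - a1 * d0) * (b1 * c0)) := by
            rw [hp01, hp10]
        _ = ((a0 * d1 - a1 * d0) * (b0 * c0)) * ((a0 * d1 - a1 * d0) * (b1 * c1)) := by ring
        _ = 0 := by rw [hp00, hp11]; ring
    exact mul_self_eq_zero.mp hsq
  have ha1 : a1 = 0 := by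
    have hsq : a1 * a1 = 0 := by
      calc a1 * a1 = (-((a0 * d1 - a1 * d0) * (e0 * f1))) * (-((a0 * d1 - a1 * d0) * (e1 * f0))) := by
            rw [hq01, hq10]; ring
        _ = ((a0 * d1 - a1 * d0) * (e0 * f0)) * ((a0 * d1 - a1 * d0) * (e1 * f1)) := by ring
        _ = 0 := by rw [hq00, hq11]; ring
    exact mul_self_eq_zero.mp hsq
  -- Now the (1,0,0) equation says 1 = a1*b0*c0 + d1*e0*f0 = 0.
  have : (1 : ℂ) = 0 := by linear_combination e100 + b0 * c0 * ha1 + e0 * f0 * hd1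
  exact one_ne_zero this
end

section
/- Let M be a 2×2 complex matrix with two distinct eigenvalues, and let ψ : Fin 2 × Fin 2 × Fin 2 → ℂ be the three-qubit state with coefficients ψ(i,0,k) = δ_{ik} and ψ(i,1,k) = M(i,k) (coefficient matrix (I₂ | M)). Then ψ is SLOCC-equivalent to the GHZ state |000⟩ + |111⟩. -/
/-- If `M` is a `2×2` complex matrix with two distinct eigenvalues, the three-qubit
state with coefficient matrix `(I₂ | M)` is SLOCC-equivalent to the GHZ state. -/
theorem coeff_I_M_distinct_eigenvalues_slocc_equiv_ghz
    (M : Matrix (Fin 2) (Fin 2) ℂ)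
    (hM : ∃ μ₁ μ₂ : ℂ, μ₁ ≠ μ₂ ∧
      Module.End.HasEigenvalue (Matrix.toLin' M) μ₁ ∧
      Module.End.HasEigenvalue (Matrix.toLin' M) μ₂)
    (ψ : Fin 2 × Fin 2 × Fin 2 → ℂ)
    (hψ0 : ∀ i k : Fin 2, ψ (i, 0, k) = if i = k then 1 else 0)
    (hψ1 : ∀ i k : Fin 2, ψ (i, 1, k) = M i k) :
    ∃ A₁ A₂ A₃ : Matrix (Fin 2) (Fin 2) ℂ,
      IsUnit A₁ ∧ IsUnit A₂ ∧ IsUnit A₃ ∧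
      ∀ i j k : Fin 2,
        GHZ3 (i, j, k) =
          ∑ a : Fin 2, ∑ b : Fin 2, ∑ c : Fin 2,
            A₁ i a * A₂ j b * A₃ k c * ψ (a, b, c) := by
  obtain ⟨μ₁, μ₂, hne, h1, h2⟩ := hM
  obtain ⟨v₁, hv₁⟩ := h1.exists_hasEigenvector
  obtain ⟨v₂, hv₂⟩ := h2.exists_hasEigenvector
  have hmv₁ : M.mulVec v₁ = μ₁ • v₁ := by
    simpa [Matrix.toLin'_apply] using hv₁.apply_eq_smul
  have hmv₂ : M.mulVec v₂ = μ₂ • v₂ := by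
    simpa [Matrix.toLin'_apply] using hv₂.apply_eq_smul
  -- the eigenvector matrix
  set P : Matrix (Fin 2) (Fin 2) ℂ := Matrix.of fun i j => if j = 0 then v₁ i else v₂ i with hPdef
  have hμinj : Function.Injective (fun i : Fin 2 => if i = 0 then μ₁ else μ₂) := by
    intro a b hab
    fin_cases a <;> fin_cases b <;> simp_all
  have hli : LinearIndependent ℂ (fun j : Fin 2 => if j = 0 then v₁ else v₂) :=
    Module.End.eigenvectors_linearIndependent' (Matrix.toLin' M)
      (fun i : Fin 2 => if i = 0 then μ₁ else μ₂) hμinj _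
      (by intro i; fin_cases i <;> simp [hv₁, hv₂])
  have hPunit : IsUnit P := by
    rw [← Matrix.linearIndependent_cols_iff_isUnit]
    have : (fun j : Fin 2 => P.transpose j) = fun j : Fin 2 => if j = 0 then v₁ else v₂ := by
      funext j i
      by_cases h : j = 0 <;> simp [hPdef, h]
    show LinearIndependent ℂ (fun j : Fin 2 => P.transpose j); rw [this]; exact hli
  have hPdet : IsUnit P.det := (Matrix.isUnit_iff_isUnit_det P).mp hPunit
  set D : Matrix (Fin 2) (Fin 2) ℂ := Matrix.diagonal ![μ₁, μ₂] with hDdef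
  have hMP : M * P = P * D := by
    ext i j
    fin_cases j
    · have := congrFun hmv₁ i
      simpa [Matrix.mul_apply, Matrix.mulVec, dotProduct, hPdef, hDdef,
        Fin.sum_univ_two, mul_comm] using this
    · have := congrFun hmv₂ i
      simpa [Matrix.mul_apply, Matrix.mulVec, dotProduct, hPdef, hDdef,
        Fin.sum_univ_two, mul_comm] using this
  have hP1 : P⁻¹ * P = 1 := Matrix.nonsing_inv_mul P hPdet
  have hPD : P⁻¹ * (M * P) = D := by
    rw [hMP, ← Matrix.mul_assoc, hP1, Matrix.one_mul]
  set e : ℂ := μ₁ - μ₂ with hedef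
  have he : e ≠ 0 := sub_ne_zero.mpr hne
  refine ⟨P⁻¹, !![-μ₂/e, 1/e; μ₁/e, -(1/e)], P.transpose, ?_, ?_, ?_, ?_⟩
  · exact (Matrix.isUnit_nonsing_inv_iff).mpr hPunit
  · rw [Matrix.isUnit_iff_isUnit_det, Matrix.det_fin_two]
    simp only [Matrix.of_apply, Matrix.cons_val', Matrix.cons_val_zero, Matrix.cons_val_one, Matrix.head_cons,
      Matrix.empty_val', Matrix.cons_val_fin_one, Matrix.head_fin_const, isUnit_iff_ne_zero]
    field_simp
    intro h
    rcases div_eq_zero_iff.mp h with h | h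
    · exact he (by rw [hedef]; linear_combination -h)
    · exact he (pow_eq_zero_iff two_ne_zero |>.mp h)
  · rwa [Matrix.isUnit_transpose]
  · -- entrywise consequences of hP1 and hPD
    have h1 : ∀ i k : Fin 2, P⁻¹ i 0 * P 0 k + P⁻¹ i 1 * P 1 k
        = (1 : Matrix (Fin 2) (Fin 2) ℂ) i k := by
      intro i k
      have := congrFun (congrFun hP1 i) k
      simpa [Matrix.mul_apply, Fin.sum_univ_two] using this
    have h2 : ∀ i k : Fin 2,
        P⁻¹ i 0 * (M 0 0 * P 0 k + M 0 1 * P 1 k)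
          + P⁻¹ i 1 * (M 1 0 * P 0 k + M 1 1 * P 1 k) = D i k := by
      intro i k
      have := congrFun (congrFun hPD i) k
      simpa [Matrix.mul_apply, Fin.sum_univ_two] using this
    intro i j k
    have key : (∑ a : Fin 2, ∑ b : Fin 2, ∑ c : Fin 2,
        P⁻¹ i a * (!![-μ₂/e, 1/e; μ₁/e, -(1/e)]) j b * P.transpose k c * ψ (a, b, c))
        = (!![-μ₂/e, 1/e; μ₁/e, -(1/e)]) j 0 * (1 : Matrix (Fin 2) (Fin 2) ℂ) i k
          + (!![-μ₂/e, 1/e; μ₁/e, -(1/e)]) j 1 * D i k := by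
      simp only [Fin.sum_univ_two, hψ0, hψ1, Matrix.transpose_apply]
      rw [← h1 i k, ← h2 i k]
      norm_num
      ring
    rw [key]
    fin_cases i <;> fin_cases j <;> fin_cases k <;>
      simp [GHZ3, hDdef, Matrix.one_apply, Prod.ext_iff] <;>
      field_simp <;> ring
end

section
/- The elementary three-qutrit hypergraph state |H₃⟩, defined by coefficients c_{ijk} = ω^{ijk} for i,j,k ∈ {0,1,2} where ω = e^{2πi/3}, is SLOCC-equivalent to the three-qutrit GHZ state |000⟩ + |111⟩ + |222⟩. -/
/-- The three-qutrit GHZ state `|000⟩ + |111⟩ + |222⟩`. -/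
noncomputable def GHZ33 : Fin 3 × Fin 3 × Fin 3 → ℂ :=
  fun x => if x = (0, 0, 0) ∨ x = (1, 1, 1) ∨ x = (2, 2, 2) then 1 else 0

/-- The elementary three-qutrit hypergraph state `|H₃⟩`, with coefficients
`ω^{ijk}` where `ω = e^{2πi/3}`. -/
noncomputable def H3 : Fin 3 × Fin 3 × Fin 3 → ℂ :=
  fun x => Complex.exp (2 * Real.pi * Complex.I / 3) ^
    ((x.1 : ℕ) * (x.2.1 : ℕ) * (x.2.2 : ℕ))

set_option maxHeartbeats 1600000 in
/-- Key computation: with `ω` a primitive cube root of unity and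
`c = (2ω+1)⁻¹`, the explicit local operations transform `ω^{abc}` into GHZ. -/
theorem h3_aux (ω c : ℂ) (hω : ω ^ 2 + ω + 1 = 0) (hc : c * (2 * ω + 1) = 1)
    (i j k : Fin 3) :
    GHZ33 (i, j, k) =
      ∑ a : Fin 3, ∑ b : Fin 3, ∑ cc : Fin 3,
        (!![1, 0, 0; 2/3, -1/3, -1/3; 0, c, -c] : Matrix (Fin 3) (Fin 3) ℂ) i a *
        (!![1, 0, 0; -1, 1/2, 1/2; 0, 1/2, -1/2] : Matrix (Fin 3) (Fin 3) ℂ) j b *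
        (!![1, 0, 0; -1, 1/2, 1/2; 0, 1/2, -1/2] : Matrix (Fin 3) (Fin 3) ℂ) k cc *
        ω ^ ((a : ℕ) * (b : ℕ) * (cc : ℕ)) := by
  have hI : ∀ x : Fin 3, x = 0 ∨ x = 1 ∨ x = 2 := by decide
  rcases hI i with rfl | rfl | rfl <;> rcases hI j with rfl | rfl | rfl <;>
      rcases hI k with rfl | rfl | rfl <;>
    simp only [GHZ33, Fin.sum_univ_three, Matrix.cons_val_zero, Matrix.cons_val_one,
      Matrix.head_cons, Matrix.cons_val_two, Matrix.tail_cons, Matrix.cons_val',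
      Matrix.empty_val', Matrix.cons_val_fin_one, Matrix.head_fin_const,
      Fin.val_zero, Fin.val_one, Fin.val_two, Fin.isValue, Prod.mk.injEq, Matrix.of_apply]
  · norm_num [Fin.ext_iff, Matrix.vecHead, Matrix.vecTail] <;> ring
  · norm_num [Fin.ext_iff, Matrix.vecHead, Matrix.vecTail] <;> ring
  · norm_num [Fin.ext_iff, Matrix.vecHead, Matrix.vecTail] <;> ring
  · norm_num [Fin.ext_iff, Matrix.vecHead, Matrix.vecTail] <;> ring
  · norm_num [Fin.ext_iff, Matrix.vecHead, Matrix.vecTail] <;> ring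
  · norm_num [Fin.ext_iff, Matrix.vecHead, Matrix.vecTail] <;> ring
  · norm_num [Fin.ext_iff, Matrix.vecHead, Matrix.vecTail] <;> ring
  · norm_num [Fin.ext_iff, Matrix.vecHead, Matrix.vecTail] <;> ring
  · norm_num [Fin.ext_iff, Matrix.vecHead, Matrix.vecTail] <;> ring
  · norm_num [Fin.ext_iff, Matrix.vecHead, Matrix.vecTail] <;> ring
  · norm_num [Fin.ext_iff, Matrix.vecHead, Matrix.vecTail] <;> ring
  · norm_num [Fin.ext_iff, Matrix.vecHead, Matrix.vecTail] <;> ring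
  · norm_num [Fin.ext_iff, Matrix.vecHead, Matrix.vecTail] <;> ring
  · norm_num [Fin.ext_iff, Matrix.vecHead, Matrix.vecTail]
    linear_combination ((1/3:ℂ)+(5/12:ℂ)*ω+(-1/3:ℂ)*ω^2+(5/12:ℂ)*ω^3+(1/6:ℂ)*ω^4+(-1/12:ℂ)*ω^5+(-1/12:ℂ)*ω^6+(1/6:ℂ)*ω^7)*c*hω + ((-1/3:ℂ)+(-1/12:ℂ)*ω+(-1/4:ℂ)*ω^2+(-1/4:ℂ)*ω^4+(-1/12:ℂ)*ω^8)*hc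
  · norm_num [Fin.ext_iff, Matrix.vecHead, Matrix.vecTail]
    linear_combination ((1/12:ℂ)*ω+(1/6:ℂ)*ω^2+(-1/12:ℂ)*ω^3+(-1/6:ℂ)*ω^4+(1/12:ℂ)*ω^5+(1/12:ℂ)*ω^6+(-1/6:ℂ)*ω^7)*c*hω + ((-1/12:ℂ)*ω+(-1/12:ℂ)*ω^2+(1/12:ℂ)*ω^4+(1/12:ℂ)*ω^8)*hc
  · norm_num [Fin.ext_iff, Matrix.vecHead, Matrix.vecTail] <;> ring
  · norm_num [Fin.ext_iff, Matrix.vecHead, Matrix.vecTail]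
    linear_combination ((1/12:ℂ)*ω+(1/6:ℂ)*ω^2+(-1/12:ℂ)*ω^3+(-1/6:ℂ)*ω^4+(1/12:ℂ)*ω^5+(1/12:ℂ)*ω^6+(-1/6:ℂ)*ω^7)*c*hω + ((-1/12:ℂ)*ω+(-1/12:ℂ)*ω^2+(1/12:ℂ)*ω^4+(1/12:ℂ)*ω^8)*hc
  · norm_num [Fin.ext_iff, Matrix.vecHead, Matrix.vecTail]
    linear_combination ((1/12:ℂ)*ω+(-1/4:ℂ)*ω^3+(1/6:ℂ)*ω^4+(-1/12:ℂ)*ω^5+(-1/12:ℂ)*ω^6+(1/6:ℂ)*ω^7)*c*hω + ((-1/12:ℂ)*ω+(1/12:ℂ)*ω^2+(1/12:ℂ)*ω^4+(-1/12:ℂ)*ω^8)*hc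
  · norm_num [Fin.ext_iff, Matrix.vecHead, Matrix.vecTail] <;> ring
  · norm_num [Fin.ext_iff, Matrix.vecHead, Matrix.vecTail] <;> ring
  · norm_num [Fin.ext_iff, Matrix.vecHead, Matrix.vecTail] <;> ring
  · norm_num [Fin.ext_iff, Matrix.vecHead, Matrix.vecTail] <;> ring
  · norm_num [Fin.ext_iff, Matrix.vecHead, Matrix.vecTail]
    linear_combination ((-1/4:ℂ)*ω+(1/4:ℂ)*ω^3+(-1/4:ℂ)*ω^5+(1/4:ℂ)*ω^6)*c*hω + ((0:ℂ))*hc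
  · norm_num [Fin.ext_iff, Matrix.vecHead, Matrix.vecTail]
    linear_combination ((-1/4:ℂ)*ω+(1/2:ℂ)*ω^2+(-1/4:ℂ)*ω^3+(1/4:ℂ)*ω^5+(-1/4:ℂ)*ω^6)*c*hω + ((0:ℂ))*hc
  · norm_num [Fin.ext_iff, Matrix.vecHead, Matrix.vecTail] <;> ring
  · norm_num [Fin.ext_iff, Matrix.vecHead, Matrix.vecTail]
    linear_combination ((-1/4:ℂ)*ω+(1/2:ℂ)*ω^2+(-1/4:ℂ)*ω^3+(1/4:ℂ)*ω^5+(-1/4:ℂ)*ω^6)*c*hω + ((0:ℂ))*hc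
  · norm_num [Fin.ext_iff, Matrix.vecHead, Matrix.vecTail]
    linear_combination ((1:ℂ)+(3/4:ℂ)*ω+(-1:ℂ)*ω^2+(1/4:ℂ)*ω^3+(-1/4:ℂ)*ω^5+(1/4:ℂ)*ω^6)*c*hω + ((-1:ℂ))*hc

/-- `|H₃⟩` is SLOCC-equivalent to the three-qutrit GHZ state. -/
theorem h3_slocc_equiv_ghz :
    ∃ A₁ A₂ A₃ : Matrix (Fin 3) (Fin 3) ℂ,
      IsUnit A₁ ∧ IsUnit A₂ ∧ IsUnit A₃ ∧
      ∀ i j k : Fin 3,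
        GHZ33 (i, j, k) =
          ∑ a : Fin 3, ∑ b : Fin 3, ∑ c : Fin 3,
            A₁ i a * A₂ j b * A₃ k c * H3 (a, b, c) := by
  obtain ⟨ω, hωdef, hω⟩ :
      ∃ ω : ℂ, ω = Complex.exp (2 * Real.pi * Complex.I / 3) ∧ ω ^ 2 + ω + 1 = 0 := by
    refine ⟨_, rfl, ?_⟩
    have hω3 : Complex.exp (2 * Real.pi * Complex.I / 3) ^ 3 = 1 := by
      rw [← Complex.exp_nat_mul,
        show ((3:ℕ) * (2 * ↑Real.pi * Complex.I / 3) : ℂ) = 2 * Real.pi * Complex.I by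
          push_cast; ring]
      exact Complex.exp_two_pi_mul_I
    have hω1 : Complex.exp (2 * Real.pi * Complex.I / 3) ≠ 1 := by
      intro h
      rw [Complex.exp_eq_one_iff] at h
      obtain ⟨n, hn⟩ := h
      have him := congrArg Complex.im hn
      simp [Complex.div_im, Complex.mul_im] at him
      have hπ := Real.pi_ne_zero
      have h3 : (3:ℝ) * n = 1 := by
        field_simp at him
        nlinarith [him, Real.pi_pos]
      have h4 : ((3 * n : ℤ) : ℝ) = ((1:ℤ) : ℝ) := by push_cast; linarith
      have h5 : (3 * n : ℤ) = 1 := by exact_mod_cast h4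
      omega
    have hfac : (Complex.exp (2 * Real.pi * Complex.I / 3) - 1) *
        (Complex.exp (2 * Real.pi * Complex.I / 3) ^ 2 +
          Complex.exp (2 * Real.pi * Complex.I / 3) + 1) = 0 := by
      linear_combination hω3
    rcases mul_eq_zero.1 hfac with h | h
    · exact absurd (by linear_combination h) hω1
    · exact h
  have h2 : (2 * ω + 1 : ℂ) ≠ 0 := by
    intro h
    have h3 : (3 : ℂ) = 0 := by linear_combination 4 * hω + (-2 * ω - 1) * h
    norm_num at h3
  have hc : (2 * ω + 1 : ℂ)⁻¹ * (2 * ω + 1) = 1 := inv_mul_cancel₀ h2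
  set c : ℂ := (2 * ω + 1)⁻¹ with hcdef
  have hcne : c ≠ 0 := inv_ne_zero h2
  refine ⟨!![1, 0, 0; 2/3, -1/3, -1/3; 0, c, -c],
      !![1, 0, 0; -1, 1/2, 1/2; 0, 1/2, -1/2],
      !![1, 0, 0; -1, 1/2, 1/2; 0, 1/2, -1/2], ?_, ?_, ?_, ?_⟩
  · rw [Matrix.isUnit_iff_isUnit_det]
    have hdet : Matrix.det !![(1:ℂ), 0, 0; 2/3, -1/3, -1/3; 0, c, -c] = 2/3 * c := by
      norm_num [Matrix.det_fin_three, Matrix.vecHead, Matrix.vecTail, Matrix.cons_val_two]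
      ring
    rw [hdet, isUnit_iff_ne_zero]
    exact mul_ne_zero (by norm_num) hcne
  · rw [Matrix.isUnit_iff_isUnit_det]
    have hdet : Matrix.det !![(1:ℂ), 0, 0; -1, 1/2, 1/2; 0, 1/2, -1/2] = -1/2 := by
      norm_num [Matrix.det_fin_three, Matrix.vecHead, Matrix.vecTail, Matrix.cons_val_two]
    rw [hdet, isUnit_iff_ne_zero]; norm_num
  · rw [Matrix.isUnit_iff_isUnit_det]
    have hdet : Matrix.det !![(1:ℂ), 0, 0; -1, 1/2, 1/2; 0, 1/2, -1/2] = -1/2 := by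
      norm_num [Matrix.det_fin_three, Matrix.vecHead, Matrix.vecTail, Matrix.cons_val_two]
    rw [hdet, isUnit_iff_ne_zero]; norm_num
  intro i j k
  have key := h3_aux ω c hω hc i j k
  simp only [H3]
  rw [← hωdef]
  exact key
end

section
/- The elementary three-ququart hypergraph state |H₄⟩, defined by coefficients c_{ijk} = ω^{ijk} for i,j,k ∈ {0,1,2,3} where ω = e^{2πi/4} = i, is SLOCC-equivalent to the state |000⟩ + |111⟩ + |212⟩ + |221⟩ + |333⟩. -/
/-- The elementary three-ququart hypergraph state `|H₄⟩`, with coefficients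
`ω^{ijk}` where `ω = e^{2πi/4} = i`. -/
noncomputable def H4 : Fin 4 × Fin 4 × Fin 4 → ℂ :=
  fun x => Complex.I ^ ((x.1 : ℕ) * (x.2.1 : ℕ) * (x.2.2 : ℕ))

/-- The target state `|000⟩ + |111⟩ + |212⟩ + |221⟩ + |333⟩`. -/
noncomputable def targetH4 : Fin 4 × Fin 4 × Fin 4 → ℂ :=
  fun x => if x = (0, 0, 0) ∨ x = (1, 1, 1) ∨ x = (2, 1, 2) ∨ x = (2, 2, 1) ∨ x = (3, 3, 3)
    then 1 else 0

section H4helpers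
open Complex

private lemma fv0 : ((0 : Fin 4) : ℕ) = 0 := rfl
private lemma fv1 : ((1 : Fin 4) : ℕ) = 1 := rfl
private lemma fv2 : ((2 : Fin 4) : ℕ) = 2 := rfl
private lemma fv3 : ((3 : Fin 4) : ℕ) = 3 := rfl

private lemma Imod' (n : ℕ) : I ^ (4 * n) = 1 := by rw [pow_mul, I_pow_four, one_pow]
private lemma I2' : I ^ 2 = -1 := I_sq
private lemma I3' : I ^ 3 = -I := by rw [pow_succ, I2', neg_one_mul]
private lemma I4' : I ^ 4 = 1 := I_pow_four
private lemma I6' : I ^ 6 = -1 := by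
  rw [show (6:ℕ) = 4*1+2 by norm_num, pow_add, Imod', one_mul, I2']
private lemma I8' : I ^ 8 = 1 := by rw [show (8:ℕ) = 4*2 by norm_num, Imod']
private lemma I9' : I ^ 9 = I := by
  rw [show (9:ℕ) = 4*2+1 by norm_num, pow_add, Imod', one_mul, pow_one]
private lemma I12' : I ^ 12 = 1 := by rw [show (12:ℕ) = 4*3 by norm_num, Imod']
private lemma I18' : I ^ 18 = -1 := by
  rw [show (18:ℕ) = 4*4+2 by norm_num, pow_add, Imod', one_mul, I2']
private lemma I27' : I ^ 27 = -I := by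
  rw [show (27:ℕ) = 4*6+3 by norm_num, pow_add, Imod', one_mul, I3']

/-- The first SLOCC matrix. -/
noncomputable def H4Mat1 : Matrix (Fin 4) (Fin 4) ℂ :=
  !![1, 0, 0, 0; 1/2, 0, -(1/2), 0; -(1/2), 1/2, -(1/2), 1/2; 0, -(I/2), 0, I/2]

/-- The second and third SLOCC matrix. -/
noncomputable def H4Mat2 : Matrix (Fin 4) (Fin 4) ℂ :=
  !![1, 0, 0, 0; -1, 1/2, 0, 1/2; 1/2, 0, -(1/2), 0; 0, 1/2, 0, -(1/2)]

/-- Inverse of `H4Mat1`. -/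
noncomputable def H4Nat1 : Matrix (Fin 4) (Fin 4) ℂ :=
  !![1, 0, 0, 0; 1, -1, 1, I; 1, -2, 0, 0; 1, -1, 1, -I]

/-- Inverse of `H4Mat2`. -/
noncomputable def H4Nat2 : Matrix (Fin 4) (Fin 4) ℂ :=
  !![1, 0, 0, 0; 1, 1, 0, 1; 1, 0, -2, 0; 1, 1, 0, -1]

private lemma h4unit1 : IsUnit H4Mat1 := by
  refine isUnit_iff_exists.mpr ⟨H4Nat1, ?_, ?_⟩ <;>
  · ext i j
    fin_cases i <;> fin_cases j <;>
      norm_num [Matrix.mul_apply, Fin.sum_univ_four, H4Mat1, H4Nat1, Matrix.one_apply,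
        Fin.ext_iff, Complex.ext_iff,
        Matrix.cons_val_two, Matrix.cons_val_three, Matrix.vecHead, Matrix.vecTail]

private lemma h4unit2 : IsUnit H4Mat2 := by
  refine isUnit_iff_exists.mpr ⟨H4Nat2, ?_, ?_⟩ <;>
  · ext i j
    fin_cases i <;> fin_cases j <;>
      norm_num [Matrix.mul_apply, Fin.sum_univ_four, H4Mat2, H4Nat2, Matrix.one_apply,
        Fin.ext_iff, Complex.ext_iff,
        Matrix.cons_val_two, Matrix.cons_val_three, Matrix.vecHead, Matrix.vecTail]

set_option maxHeartbeats 3200000 in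
private lemma h4key : ∀ i j k : Fin 4, targetH4 (i, j, k) =
    ∑ a : Fin 4, ∑ b : Fin 4, ∑ c : Fin 4,
      H4Mat1 i a * H4Mat2 j b * H4Mat2 k c * H4 (a, b, c) := by
  intro i j k
  fin_cases i <;> fin_cases j <;> fin_cases k <;>
    norm_num [targetH4, H4, H4Mat1, H4Mat2, Fin.sum_univ_four, fv0, fv1, fv2, fv3,
      I2', I3', I4', I6', I8', I9', I12', I18', I27', Prod.ext_iff, Fin.ext_iff, Complex.ext_iff,
        Matrix.cons_val_two, Matrix.cons_val_three, Matrix.vecHead, Matrix.vecTail]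

end H4helpers

/-- `|H₄⟩` is SLOCC-equivalent to `|000⟩ + |111⟩ + |212⟩ + |221⟩ + |333⟩`. -/
theorem h4_slocc_equiv_target :
    ∃ A₁ A₂ A₃ : Matrix (Fin 4) (Fin 4) ℂ,
      IsUnit A₁ ∧ IsUnit A₂ ∧ IsUnit A₃ ∧
      ∀ i j k : Fin 4,
        targetH4 (i, j, k) =
          ∑ a : Fin 4, ∑ b : Fin 4, ∑ c : Fin 4,
            A₁ i a * A₂ j b * A₃ k c * H4 (a, b, c) := by
  exact ⟨H4Mat1, H4Mat2, H4Mat2, h4unit1, h4unit2, h4unit2, h4key⟩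
end

section
/- Let c₀, c₁, c₂ be complex numbers with c₂ ≠ 0, and let ψ : Fin 3 × Fin 3 × Fin 3 → ℂ be the three-qutrit state with coefficients ψ(i,j,k) = c_{i+j+k}, where c_m = 0 for m ≥ 3. Then ψ is SLOCC-equivalent to the three-qutrit Dicke state with two excitations, Σ_{i+j+k=2} |ijk⟩ = |200⟩ + |020⟩ + |002⟩ + |110⟩ + |101⟩ + |011⟩. -/
set_option maxHeartbeats 1000000

/-- The three-qutrit Dicke state with two excitations:
`|200⟩ + |020⟩ + |002⟩ + |110⟩ + |101⟩ + |011⟩`. -/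
noncomputable def Dicke32 : Fin 3 × Fin 3 × Fin 3 → ℂ :=
  fun x => if (x.1 : ℕ) + (x.2.1 : ℕ) + (x.2.2 : ℕ) = 2 then 1 else 0

/-- The Hankel-type coefficient sequence: `c₀, c₁, c₂` and `0` for indices `≥ 3`. -/
noncomputable def hankelCoef (c₀ c₁ c₂ : ℂ) : ℕ → ℂ :=
  fun m => if m = 0 then c₀ else if m = 1 then c₁ else if m = 2 then c₂ else 0

/-- For `c₂ ≠ 0`, the three-qutrit state with coefficients `ψ(i,j,k) = c_{i+j+k}`
(`c_m = 0` for `m ≥ 3`) is SLOCC-equivalent to the Dicke state with two excitations. -/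
theorem hankel_state_slocc_equiv_dicke (c₀ c₁ c₂ : ℂ) (hc₂ : c₂ ≠ 0)
    (ψ : Fin 3 × Fin 3 × Fin 3 → ℂ)
    (hψ : ∀ x : Fin 3 × Fin 3 × Fin 3,
      ψ x = hankelCoef c₀ c₁ c₂ ((x.1 : ℕ) + (x.2.1 : ℕ) + (x.2.2 : ℕ))) :
    ∃ A₁ A₂ A₃ : Matrix (Fin 3) (Fin 3) ℂ,
      IsUnit A₁ ∧ IsUnit A₂ ∧ IsUnit A₃ ∧
      ∀ i j k : Fin 3,
        Dicke32 (i, j, k) =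
          ∑ a : Fin 3, ∑ b : Fin 3, ∑ c : Fin 3,
            A₁ i a * A₂ j b * A₃ k c * ψ (a, b, c) := by
  set A : Matrix (Fin 3) (Fin 3) ℂ :=
    !![c₂, 0, -c₀/3; 0, 1/c₂, -c₁/c₂^2; 0, 0, 1/c₂^3] with hA
  have hU : IsUnit A := by
    rw [Matrix.isUnit_iff_isUnit_det, isUnit_iff_ne_zero, Matrix.det_fin_three]
    simp only [hA, Matrix.of_apply, Matrix.cons_val', Matrix.cons_val_zero,
      Matrix.cons_val_one, Matrix.head_cons, Matrix.empty_val',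
      Matrix.cons_val_fin_one, Matrix.head_fin_const, Matrix.cons_val_two,
      Matrix.tail_cons, Matrix.vecHead, Matrix.vecTail]
    simp only [Function.comp_apply, Matrix.cons_val_succ, Matrix.cons_val_zero]
    field_simp
    simp [hc₂]
  refine ⟨A, A, A, hU, hU, hU, ?_⟩
  intro i j k
  simp only [hψ]
  fin_cases i <;> fin_cases j <;> fin_cases k <;>
    simp only [Dicke32, hankelCoef, hA, Fin.sum_univ_three, Matrix.of_apply,
      Matrix.cons_val', Matrix.cons_val_zero, Matrix.cons_val_one, Matrix.head_cons,
      Matrix.empty_val', Matrix.cons_val_fin_one, Matrix.head_fin_const, Fin.isValue,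
      Matrix.cons_val_two, Matrix.tail_cons] <;>
    norm_num <;> field_simp <;> ring
end
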